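/- Let $F$ be a finite simple graph and $H$ an $(r+2)$-uniform hypergraph on $N$ vertices, $r\ge 0$. Let $F_r$ be the $r$-subdivision of $F$ and $G[H]$ the codegree-section weighted graph of $H$ with edge weights $w(\{u,v\})=N^{-r}\,\mathrm{codeg}_H(u,v)$. Then $\hom(F_r,H)=(r!\,N^r)^{|E(F)|}\hom(F,G[H])$, where $\hom(F,G[H])=\sum_{\varphi:V(F)\to V(H)}\prod_{\{u,v\}\in E(F)} w(\{\varphi(u),\varphi(v)\})$. -/

import Mathlib

open MeasureTheory

noncomputable section

/-- Number of hypergraph homomorphisms: maps sending every edge of `EF` onto an edge of `EH`. -/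
def homCountHyper {A B : Type*} [DecidableEq B] (EF : Finset (Finset A))
    (EH : Finset (Finset B)) : ℕ :=
  Nat.card {φ : A → B // ∀ e ∈ EF, e.image φ ∈ EH}

/-- Number of edges of `EH` containing the vertex set `s`. -/
def codegS {B : Type*} [DecidableEq B] (EH : Finset (Finset B)) (s : Finset B) : ℕ :=
  (EH.filter fun e => s ⊆ e).card

/-- The internal vertices attached to the edge `e` in the `r`-subdivision. -/
def internal {V : Type*} [Fintype V] [DecidableEq V] (F : SimpleGraph V)
    [DecidableRel F.Adj] (r : ℕ) (e : {e : Sym2 V // e ∈ F.edgeFinset}) :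
    Finset (V ⊕ ({e : Sym2 V // e ∈ F.edgeFinset} × Fin r)) :=
  Finset.univ.image fun i : Fin r => Sum.inr (e, i)

/-- The hyperedge of the `r`-subdivision corresponding to the edge `e` of `F`. -/
def subdivEdge {V : Type*} [Fintype V] [DecidableEq V] (F : SimpleGraph V)
    [DecidableRel F.Adj] (r : ℕ) (e : {e : Sym2 V // e ∈ F.edgeFinset}) :
    Finset (V ⊕ ({e : Sym2 V // e ∈ F.edgeFinset} × Fin r)) :=
  ((Finset.univ.filter fun v : V => v ∈ (e : Sym2 V)).image Sum.inl) ∪ internal F r e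

/-- The edge set of the `r`-subdivision of `F`. -/
def subdivEdges {V : Type*} [Fintype V] [DecidableEq V] (F : SimpleGraph V)
    [DecidableRel F.Adj] (r : ℕ) :
    Finset (Finset (V ⊕ ({e : Sym2 V // e ∈ F.edgeFinset} × Fin r))) :=
  F.edgeFinset.attach.image (subdivEdge F r)

/-- Weighted homomorphism count of `F` into the codegree-section weighted graph `G[H]`,
with edge weights `N^(-r) * codeg` (and weight `0` on loops). -/
def homCountCodeg {V : Type*} [Fintype V] [DecidableEq V] (F : SimpleGraph V)
    [DecidableRel F.Adj] (N r : ℕ) (EH : Finset (Finset (Fin N))) : ℝ :=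
  ∑ φ : V → Fin N, ∏ e ∈ F.edgeFinset.attach,
    (let s := (Finset.univ.filter fun v : V => v ∈ (e : Sym2 V)).image φ
     if s.card = 2 then ((N : ℝ) ^ r)⁻¹ * (codegS EH s : ℝ) else 0)

lemma count_image_eq {N r : ℕ} (t : Finset (Fin N)) (ht : t.card = r) :
    (Finset.univ.filter fun h : Fin r → Fin N => Finset.univ.image h = t).card
      = r.factorial := by
  rw [← Fintype.card_subtype]
  have key : ∀ h : {h : Fin r → Fin N // Finset.univ.image h = t},
      Function.Bijective (fun i : Fin r => (⟨h.1 i, (Finset.ext_iff.mp h.2 _).mp (Finset.mem_image_of_mem _ (Finset.mem_univ i))⟩ : ↥t)) := by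
    intro h
    rw [Fintype.bijective_iff_injective_and_card]
    constructor
    · intro a b hab
      have hinj : Set.InjOn h.1 ↑(Finset.univ : Finset (Fin r)) :=
        Finset.card_image_iff.mp (by rw [h.2, ht, Finset.card_univ, Fintype.card_fin])
      exact hinj (by simp) (by simp) (congrArg Subtype.val hab)
    · simp [ht]
  let E : {h : Fin r → Fin N // Finset.univ.image h = t} ≃ (Fin r ≃ ↥t) :=
    { toFun := fun h => Equiv.ofBijective _ (key h)
      invFun := fun g => ⟨fun i => (g i : Fin N), by
        ext x
        simp only [Finset.mem_image, Finset.mem_univ, true_and]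
        constructor
        · rintro ⟨i, rfl⟩; exact (g i).2
        · intro hx; exact ⟨g.symm ⟨x, hx⟩, by simp⟩⟩
      left_inv := fun h => rfl
      right_inv := fun g => by ext i; rfl }
  rw [Fintype.card_congr E, Fintype.card_equiv
    (Fintype.equivOfCardEq (by simp [ht])), Fintype.card_fin]

lemma count_edge {N r : ℕ} (EH : Finset (Finset (Fin N)))
    (hunif : ∀ e ∈ EH, e.card = r + 2)
    (s : Finset (Fin N)) (hs : s.card = 2) :
    Nat.card {h : Fin r → Fin N // s ∪ Finset.univ.image h ∈ EH}
      = r.factorial * codegS EH s := by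
  rw [Nat.card_eq_fintype_card, Fintype.card_subtype]
  have hsplit : (Finset.univ.filter fun h : Fin r → Fin N => s ∪ Finset.univ.image h ∈ EH)
      = (EH.filter fun f => s ⊆ f).biUnion
          (fun f => Finset.univ.filter fun h => s ∪ Finset.univ.image h = f) := by
    ext h
    simp only [Finset.mem_filter, Finset.mem_univ, true_and, Finset.mem_biUnion]
    constructor
    · intro hh; exact ⟨s ∪ Finset.univ.image h, ⟨hh, Finset.subset_union_left⟩, rfl⟩
    · rintro ⟨f, ⟨hf, -⟩, hh⟩; rw [hh]; exact hf
  rw [hsplit, Finset.card_biUnion]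
  · have hfib : ∀ f ∈ EH.filter fun f => s ⊆ f,
        (Finset.univ.filter fun h : Fin r → Fin N => s ∪ Finset.univ.image h = f).card
          = r.factorial := by
      intro f hf
      rw [Finset.mem_filter] at hf
      obtain ⟨hfEH, hsf⟩ := hf
      have hcard : (f \ s).card = r := by
        rw [Finset.card_sdiff_of_subset hsf, hunif f hfEH, hs]; omega
      have : (Finset.univ.filter fun h : Fin r → Fin N => s ∪ Finset.univ.image h = f)
          = (Finset.univ.filter fun h : Fin r → Fin N => Finset.univ.image h = f \ s) := by
        ext h
        simp only [Finset.mem_filter, Finset.mem_univ, true_and]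
        constructor
        · intro hu
          refine (Finset.eq_of_subset_of_card_le ?_ ?_).symm
          · intro x hx
            rw [Finset.mem_sdiff] at hx
            have : x ∈ s ∪ Finset.univ.image h := hu ▸ hx.1
            rcases Finset.mem_union.mp this with h1 | h1
            · exact absurd h1 hx.2
            · exact h1
          · calc (Finset.univ.image h).card ≤ (Finset.univ : Finset (Fin r)).card :=
                  Finset.card_image_le
              _ = r := by simp
              _ = (f \ s).card := hcard.symm
        · intro hi
          rw [hi, Finset.union_sdiff_of_subset hsf]
      rw [this, count_image_eq _ hcard]
    rw [Finset.sum_congr rfl hfib, Finset.sum_const, smul_eq_mul, mul_comm, codegS]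
  · intro f hf f' hf' hne
    refine Finset.disjoint_left.mpr fun {h} h1 h2 => ?_
    rw [Finset.mem_filter] at h1 h2
    exact hne (h1.2 ▸ h2.2 ▸ rfl)

lemma count_edge_zero {N r : ℕ} (EH : Finset (Finset (Fin N)))
    (hunif : ∀ e ∈ EH, e.card = r + 2)
    (s : Finset (Fin N)) (hs : s.card < 2) :
    Nat.card {h : Fin r → Fin N // s ∪ Finset.univ.image h ∈ EH} = 0 := by
  rw [Nat.card_eq_zero]
  refine Or.inl ⟨fun h => ?_⟩
  have h1 := hunif _ h.2
  have h2 : (s ∪ Finset.univ.image h.1).card ≤ s.card + r := by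
    refine le_trans (Finset.card_union_le _ _) ?_
    have : (Finset.univ.image h.1).card ≤ r := le_trans Finset.card_image_le (by simp)
    omega
  omega

lemma filter_mem_sym2 {V : Type*} [Fintype V] [DecidableEq V] (e : Sym2 V) :
    ∃ u v : V, (Finset.univ.filter fun w => w ∈ e) = {u, v} := by
  induction e using Sym2.ind with
  | _ u v => exact ⟨u, v, by ext w; simp [Sym2.mem_iff]⟩

theorem stmt6 {V : Type*} [Fintype V] [DecidableEq V] (F : SimpleGraph V)
    [DecidableRel F.Adj] (r N : ℕ)
    (EH : Finset (Finset (Fin N))) (hunif : ∀ e ∈ EH, e.card = r + 2) :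
    (homCountHyper (subdivEdges F r) EH : ℝ)
      = ((Nat.factorial r * N ^ r : ℕ) : ℝ) ^ F.edgeFinset.card
        * homCountCodeg F N r EH := by
  classical
  have step1 : homCountHyper (subdivEdges F r) EH
      = ∑ φ₀ : V → Fin N, ∏ e : {e : Sym2 V // e ∈ F.edgeFinset},
          Nat.card {h : Fin r → Fin N //
            ((Finset.univ.filter fun v : V => v ∈ (e : Sym2 V)).image φ₀
              ∪ Finset.univ.image h) ∈ EH} := by
    rw [homCountHyper]
    have e1 : {φ : (V ⊕ {e : Sym2 V // e ∈ F.edgeFinset} × Fin r) → Fin N //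
          ∀ e ∈ subdivEdges F r, e.image φ ∈ EH}
        ≃ {φ : (V ⊕ {e : Sym2 V // e ∈ F.edgeFinset} × Fin r) → Fin N //
          ∀ e : {e : Sym2 V // e ∈ F.edgeFinset},
            ((Finset.univ.filter fun v : V => v ∈ (e : Sym2 V)).image (φ ∘ Sum.inl)
              ∪ Finset.univ.image (fun i : Fin r => φ (Sum.inr (e, i)))) ∈ EH} := by
      refine Equiv.subtypeEquivRight fun φ => ?_
      have hedge : ∀ e : {e : Sym2 V // e ∈ F.edgeFinset},
          (subdivEdge F r e).image φ
            = (Finset.univ.filter fun v : V => v ∈ (e : Sym2 V)).image (φ ∘ Sum.inl)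
              ∪ Finset.univ.image (fun i : Fin r => φ (Sum.inr (e, i))) := by
        intro e
        rw [subdivEdge, internal, Finset.image_union, Finset.image_image, Finset.image_image]
        rfl
      constructor
      · intro h e
        rw [← hedge e]
        exact h _ (Finset.mem_image_of_mem _ (Finset.mem_attach _ _))
      · intro h f hf
        rw [subdivEdges, Finset.mem_image] at hf
        obtain ⟨e, -, rfl⟩ := hf
        rw [hedge e]
        exact h e
    have e3 := Equiv.subtypeEquiv (p := fun φ : (V ⊕ {e : Sym2 V // e ∈ F.edgeFinset} × Fin r) → Fin N =>
        ∀ e : {e : Sym2 V // e ∈ F.edgeFinset},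
            ((Finset.univ.filter fun v : V => v ∈ (e : Sym2 V)).image (φ ∘ Sum.inl)
              ∪ Finset.univ.image (fun i : Fin r => φ (Sum.inr (e, i)))) ∈ EH)
      (q := fun p : (V → Fin N) × ({e : Sym2 V // e ∈ F.edgeFinset} → Fin r → Fin N) =>
        ∀ e : {e : Sym2 V // e ∈ F.edgeFinset},
            ((Finset.univ.filter fun v : V => v ∈ (e : Sym2 V)).image p.1
              ∪ Finset.univ.image (p.2 e)) ∈ EH)
      ((Equiv.sumArrowEquivProdArrow _ _ _).trans
        (Equiv.prodCongr (Equiv.refl _) (Equiv.curry _ _ _))) (fun φ => Iff.rfl)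
    have e4 := Equiv.subtypeProdEquivSigmaSubtype
      (fun (φ₀ : V → Fin N) (g : {e : Sym2 V // e ∈ F.edgeFinset} → Fin r → Fin N) =>
        ∀ e : {e : Sym2 V // e ∈ F.edgeFinset},
            ((Finset.univ.filter fun v : V => v ∈ (e : Sym2 V)).image φ₀
              ∪ Finset.univ.image (g e)) ∈ EH)
    have e5 := Equiv.sigmaCongrRight (fun φ₀ : V → Fin N =>
      (Equiv.subtypePiEquivPi (p := fun (e : {e : Sym2 V // e ∈ F.edgeFinset}) (h : Fin r → Fin N) =>
        ((Finset.univ.filter fun v : V => v ∈ (e : Sym2 V)).image φ₀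
              ∪ Finset.univ.image h) ∈ EH)))
    rw [Nat.card_eq_fintype_card,
      Fintype.card_congr (((e1.trans e3).trans e4).trans e5), Fintype.card_sigma]
    refine Finset.sum_congr rfl fun φ₀ _ => ?_
    rw [Fintype.card_pi]
    exact Finset.prod_congr rfl fun e _ => (Nat.card_eq_fintype_card).symm
  rw [step1, homCountCodeg]
  push_cast
  rw [Finset.mul_sum]
  refine Finset.sum_congr rfl fun φ₀ _ => ?_
  rw [Finset.univ_eq_attach]
  rw [← Finset.card_attach (s := F.edgeFinset)]
  rw [← Finset.prod_const, ← Finset.prod_mul_distrib]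
  refine Finset.prod_congr rfl fun e _ => ?_
  obtain ⟨u, v, huv⟩ := filter_mem_sym2 (V := V) (e : Sym2 V)
  have hNpos : 0 < N := (φ₀ u).pos
  set s : Finset (Fin N) := (Finset.univ.filter fun w : V => w ∈ (e : Sym2 V)).image φ₀ with hsdef
  have hcard : s.card ≤ 2 := by
    rw [hsdef, huv]
    exact le_trans Finset.card_image_le (le_trans (Finset.card_insert_le _ _) (by simp))
  have hne : s.Nonempty := by
    rw [hsdef, huv]
    exact Finset.Nonempty.image (Finset.insert_nonempty _ _) _
  by_cases h2 : s.card = 2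
  · rw [if_pos h2, count_edge EH hunif s h2]
    have : ((N : ℝ) ^ r) ≠ 0 := by positivity
    push_cast
    field_simp
  · rw [if_neg h2, count_edge_zero EH hunif s (by omega)]
    simp
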